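/- Let f : 𝕋 → (0,∞) be a potential such that log f is 5-equispacing (in particular this holds if f is decreasing and logarithmically convex on (0,1/2], or if f(t) = h(cos(2πt)) with log h absolutely monotone on [−1,1)). Then the 5-point Fibonacci lattice Φ_5 = {(0,0), (1/5,3/5), (2/5,1/5), (3/5,4/5), (4/5,2/5)} ⊂ 𝕋² satisfies E_F(Y) ≥ E_F(Φ_5) = 20 f(1/5) f(2/5) for every 5-point configuration Y ⊆ 𝕋². -/

import Mathlib

open Finset Real

/-- Pairwise interaction energy of `N` points on the circle `𝕋 = ℝ/ℤ ≃ [0,1)`: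
`E_g(y^0,…,y^{N-1}) = Σ_{k ≠ ℓ} g(y^k − y^ℓ)`. -/
noncomputable def energy1 {N : ℕ} (g : ℝ → ℝ) (y : Fin N → ℝ) : ℝ :=
  ∑ k : Fin N, ∑ ℓ : Fin N, if k = ℓ then 0 else g (y k - y ℓ)

/-- Tensor product energy of `N` points in `𝕋^d ≃ [0,1)^d`:
`E_F(Y) = Σ_{k ≠ ℓ} ∏_i f(y_i^k − y_i^ℓ)`. -/
noncomputable def energyProd {N d : ℕ} (f : ℝ → ℝ) (y : Fin N → Fin d → ℝ) : ℝ :=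
  ∑ k : Fin N, ∑ ℓ : Fin N, if k = ℓ then 0 else ∏ i : Fin d, f (y k i - y ℓ i)

/-- A (1-periodic, even) function `g` is `N`-equispacing if the `N` equispaced
points minimize the energy `E_g` on the circle. -/
def NEquispacing (N : ℕ) (g : ℝ → ℝ) : Prop :=
  ∀ y : Fin N → ℝ, (∀ k, y k ∈ Set.Ico (0 : ℝ) 1) →
    energy1 g y ≥ energy1 g (fun k : Fin N => ((k : ℕ) : ℝ) / N)

/-- The 5-point Fibonacci lattice
`Φ_5 = {(0,0), (1/5,3/5), (2/5,1/5), (3/5,4/5), (4/5,2/5)} ⊂ 𝕋²`. -/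
noncomputable def fibonacci5 : Fin 5 → Fin 2 → ℝ :=
  ![![0, 0], ![1/5, 3/5], ![2/5, 1/5], ![3/5, 4/5], ![4/5, 2/5]]

/-- Universal optimality of the 5-point Fibonacci lattice: if `f : 𝕋 → (0,∞)`
is a potential with `log f` 5-equispacing, then `Φ_5` minimizes the tensor
product energy `E_F` among all 5-point configurations in `𝕋²`, and
`E_F(Φ_5) = 20 f(1/5) f(2/5)`. -/
theorem fibonacci5_minimizes (f : ℝ → ℝ)
    (hf_pos : ∀ t, 0 < f t)
    (hf_per : Function.Periodic f 1)
    (hf_even : ∀ t, f t = f (1 - t))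
    (hequi : NEquispacing 5 (fun t => Real.log (f t))) :
    energyProd f fibonacci5 = 20 * f (1/5) * f (2/5) ∧
    ∀ y : Fin 5 → Fin 2 → ℝ, (∀ k i, y k i ∈ Set.Ico (0 : ℝ) 1) →
      energyProd f y ≥ energyProd f fibonacci5 := by
  -- basic symmetry facts about `f`
  have hneg : ∀ t : ℝ, f (-t) = f t := by
    intro t
    have h1 : f (-t + 1) = f (-t) := hf_per (-t)
    have h2 : (-t : ℝ) + 1 = 1 - t := by ring
    rw [← h1, h2, ← hf_even]
  have e43 : f (4/5) = f (1/5) := by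
    have := hf_even (4/5); norm_num at this; exact this
  have e32 : f (3/5) = f (2/5) := by
    have := hf_even (3/5); norm_num at this; exact this
  have n1 : f (-(1/5)) = f (1/5) := hneg _
  have n2 : f (-(2/5)) = f (2/5) := hneg _
  have n3 : f (-(3/5)) = f (2/5) := (hneg _).trans e32
  have n4 : f (-(4/5)) = f (1/5) := (hneg _).trans e43
  set g : ℝ → ℝ := fun t => Real.log (f t) with hg
  have ge43 : g (4/5) = g (1/5) := by simp only [hg, e43]
  have ge32 : g (3/5) = g (2/5) := by simp only [hg, e32]
  have gn1 : g (-(1/5)) = g (1/5) := by simp only [hg, n1]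
  have gn2 : g (-(2/5)) = g (2/5) := by simp only [hg, n2]
  have gn3 : g (-(3/5)) = g (2/5) := by simp only [hg, n3]
  have gn4 : g (-(4/5)) = g (1/5) := by simp only [hg, n4]
  -- value of the lattice energy
  have hPhi : energyProd f fibonacci5 = 20 * f (1/5) * f (2/5) := by
    simp only [energyProd, fibonacci5, Fin.sum_univ_five, Fin.prod_univ_two]
    norm_num [e43, e32, n1, n2, n3, n4]
    simp
    have a1 := hneg (1/5)
    have a2 := hneg (2/5)
    have a3 := (hneg (3/5)).trans e32
    have a4 := (hneg (4/5)).trans e43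
    have b3 := e32
    have b4 := e43
    ring_nf at a1 a2 a3 a4 b3 b4 ⊢
    simp only [a1, a2, a3, a4, b3, b4]
    ring
  refine ⟨hPhi, ?_⟩
  -- the 1D equispaced energy
  have hLval : energy1 g (fun k : Fin 5 => ((k : ℕ) : ℝ) / 5) =
      10 * g (1/5) + 10 * g (2/5) := by
    simp only [energy1, Fin.sum_univ_five,
      show ((0:Fin 5):ℕ) = 0 from rfl, show ((1:Fin 5):ℕ) = 1 from rfl,
      show ((2:Fin 5):ℕ) = 2 from rfl, show ((3:Fin 5):ℕ) = 3 from rfl,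
      show ((4:Fin 5):ℕ) = 4 from rfl]
    norm_num [ge43, ge32, gn1, gn2, gn3, gn4]
    simp
    ring
  intro y hy
  set m : ℝ := g (1/5) + g (2/5) with hm
  have hexpm : Real.exp m = f (1/5) * f (2/5) := by
    rw [hm, Real.exp_add]
    simp only [hg, Real.exp_log (hf_pos _)]
  have hc : (0:ℝ) < Real.exp m := Real.exp_pos m
  -- coordinate configurations
  have hco : ∀ i : Fin 2,
      energy1 g (fun k => y k i) ≥ 10 * g (1/5) + 10 * g (2/5) := by
    intro i
    have := hequi (fun k => y k i) (fun k => hy k i)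
    simp only [Nat.cast_ofNat] at this
    rw [hLval] at this
    exact this
  -- pointwise lower bound for off-diagonal terms
  set s : Fin 5 → Fin 5 → ℝ := fun k ℓ => g (y k 0 - y ℓ 0) + g (y k 1 - y ℓ 1) with hs
  have hterm : ∀ k ℓ : Fin 5,
      Real.exp m * (1 - m) + Real.exp m * s k ℓ ≤ ∏ i : Fin 2, f (y k i - y ℓ i) := by
    intro k ℓ
    have hprod : (∏ i : Fin 2, f (y k i - y ℓ i)) = Real.exp (s k ℓ) := by
      rw [Fin.prod_univ_two, hs]
      simp only [hg, Real.exp_add, Real.exp_log (hf_pos _)]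
    rw [hprod]
    have h1 : (s k ℓ - m) + 1 ≤ Real.exp (s k ℓ - m) := Real.add_one_le_exp _
    have h2 : Real.exp m * ((s k ℓ - m) + 1) ≤ Real.exp m * Real.exp (s k ℓ - m) :=
      mul_le_mul_of_nonneg_left h1 hc.le
    rw [← Real.exp_add] at h2
    calc Real.exp m * (1 - m) + Real.exp m * s k ℓ
        = Real.exp m * ((s k ℓ - m) + 1) := by ring
      _ ≤ Real.exp (m + (s k ℓ - m)) := h2
      _ = Real.exp (s k ℓ) := by ring_nf
  -- lower bound the product energy
  have key : energyProd f y ≥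
      ∑ k : Fin 5, ∑ ℓ : Fin 5, ((if k = ℓ then 0 else Real.exp m * (1 - m)) +
        Real.exp m * (if k = ℓ then 0 else s k ℓ)) := by
    rw [energyProd]
    refine Finset.sum_le_sum (fun k _ => Finset.sum_le_sum (fun ℓ _ => ?_))
    by_cases hkl : k = ℓ
    · simp [hkl]
    · simp only [if_neg hkl]
      exact hterm k ℓ
  have split1 : (∑ k : Fin 5, ∑ ℓ : Fin 5, ((if k = ℓ then 0 else Real.exp m * (1 - m)) +
        Real.exp m * (if k = ℓ then 0 else s k ℓ)))
      = 20 * (Real.exp m * (1 - m)) +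
        Real.exp m * (∑ k : Fin 5, ∑ ℓ : Fin 5, (if k = ℓ then 0 else s k ℓ)) := by
    simp only [Finset.sum_add_distrib, ← Finset.mul_sum]
    congr 1
    simp [Fin.sum_univ_five]
    ring
  have split2 : (∑ k : Fin 5, ∑ ℓ : Fin 5, (if k = ℓ then 0 else s k ℓ))
      = energy1 g (fun k => y k 0) + energy1 g (fun k => y k 1) := by
    simp only [energy1, hs, ← Finset.sum_add_distrib]
    refine Finset.sum_congr rfl (fun k _ => Finset.sum_congr rfl (fun ℓ _ => ?_))
    by_cases hkl : k = ℓ <;> simp [hkl]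
  have hS : (∑ k : Fin 5, ∑ ℓ : Fin 5, (if k = ℓ then 0 else s k ℓ)) ≥ 20 * m := by
    rw [split2, hm]
    have h0 := hco 0
    have h1 := hco 1
    linarith
  have final : energyProd f y ≥ 20 * Real.exp m := by
    have h3 : Real.exp m * (∑ k : Fin 5, ∑ ℓ : Fin 5, (if k = ℓ then 0 else s k ℓ))
        ≥ Real.exp m * (20 * m) := mul_le_mul_of_nonneg_left hS hc.le
    have := key
    rw [split1] at this
    nlinarith [this, h3]
  rw [hPhi]
  calc energyProd f y ≥ 20 * Real.exp m := final
    _ = 20 * f (1/5) * f (2/5) := by rw [hexpm]; ring
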